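/- Under the hypotheses of the preceding statement (P symmetric, Pξ = 0, |ξ| = 1, {u,v,n} orthonormal with ⟨ξ,n⟩ ≠ 0, λ > 0), if additionally P is positive semidefinite then det M > 0 and tr M > 0, so the 2×2 matrix M is invertible with signature 2 (both eigenvalues positive). -/

import Mathlib

open Matrix

/-- Under the hypotheses of Lemma 2, if `P` is moreover positive semidefinite then the 2×2
tangential Hessian `M` has positive determinant and positive trace, hence is invertible with
signature 2 (both eigenvalues positive, i.e. `M` is positive definite). -/
theorem M_posdef (P : Matrix (Fin 3) (Fin 3) ℝ) (hP : P.PosSemidef)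
    (ξ u v n : Fin 3 → ℝ)
    (hξ : ξ ⬝ᵥ ξ = 1) (hPξ : P.mulVec ξ = 0)
    (hu : u ⬝ᵥ u = 1) (hv : v ⬝ᵥ v = 1) (hn : n ⬝ᵥ n = 1)
    (huv : u ⬝ᵥ v = 0) (hun : u ⬝ᵥ n = 0) (hvn : v ⬝ᵥ n = 0)
    (hξn : ξ ⬝ᵥ n ≠ 0) (lam : ℝ) (hlam : 0 < lam) :
    0 < (!![P.mulVec u ⬝ᵥ u + (1 - (ξ ⬝ᵥ u)^2) / lam,
            P.mulVec u ⬝ᵥ v - (ξ ⬝ᵥ u) * (ξ ⬝ᵥ v) / lam;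
            P.mulVec u ⬝ᵥ v - (ξ ⬝ᵥ u) * (ξ ⬝ᵥ v) / lam,
            P.mulVec v ⬝ᵥ v + (1 - (ξ ⬝ᵥ v)^2) / lam] : Matrix (Fin 2) (Fin 2) ℝ).det ∧
    0 < (!![P.mulVec u ⬝ᵥ u + (1 - (ξ ⬝ᵥ u)^2) / lam,
            P.mulVec u ⬝ᵥ v - (ξ ⬝ᵥ u) * (ξ ⬝ᵥ v) / lam;
            P.mulVec u ⬝ᵥ v - (ξ ⬝ᵥ u) * (ξ ⬝ᵥ v) / lam,
            P.mulVec v ⬝ᵥ v + (1 - (ξ ⬝ᵥ v)^2) / lam] : Matrix (Fin 2) (Fin 2) ℝ).trace ∧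
    IsUnit (!![P.mulVec u ⬝ᵥ u + (1 - (ξ ⬝ᵥ u)^2) / lam,
            P.mulVec u ⬝ᵥ v - (ξ ⬝ᵥ u) * (ξ ⬝ᵥ v) / lam;
            P.mulVec u ⬝ᵥ v - (ξ ⬝ᵥ u) * (ξ ⬝ᵥ v) / lam,
            P.mulVec v ⬝ᵥ v + (1 - (ξ ⬝ᵥ v)^2) / lam] : Matrix (Fin 2) (Fin 2) ℝ) ∧
    (!![P.mulVec u ⬝ᵥ u + (1 - (ξ ⬝ᵥ u)^2) / lam,
            P.mulVec u ⬝ᵥ v - (ξ ⬝ᵥ u) * (ξ ⬝ᵥ v) / lam;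
            P.mulVec u ⬝ᵥ v - (ξ ⬝ᵥ u) * (ξ ⬝ᵥ v) / lam,
            P.mulVec v ⬝ᵥ v + (1 - (ξ ⬝ᵥ v)^2) / lam] : Matrix (Fin 2) (Fin 2) ℝ).PosDef := by
  set s := ξ ⬝ᵥ u with hs
  set t := ξ ⬝ᵥ v with ht
  set r := ξ ⬝ᵥ n with hr
  -- Bessel inequality
  have hbessel : s^2 + t^2 + r^2 ≤ 1 := by
    have h0 : (0:ℝ) ≤ (ξ - s • u - t • v - r • n) ⬝ᵥ (ξ - s • u - t • v - r • n) := by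
      simp only [dotProduct]
      exact Finset.sum_nonneg fun i _ => mul_self_nonneg _
    have hexp : (ξ - s • u - t • v - r • n) ⬝ᵥ (ξ - s • u - t • v - r • n)
        = 1 - s^2 - t^2 - r^2 := by
      simp only [dotProduct_sub, sub_dotProduct, dotProduct_smul, smul_dotProduct,
        smul_eq_mul]
      rw [dotProduct_comm u ξ, dotProduct_comm v ξ, dotProduct_comm n ξ,
        dotProduct_comm v u, dotProduct_comm n u, dotProduct_comm n v]
      rw [hξ, hu, hv, hn, huv, hun, hvn, ← hs, ← ht, ← hr]
      ring
    linarith [hexp ▸ h0]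
  have hr2 : 0 < r^2 := by positivity
  -- symmetry of P over ℝ
  have hPt : Pᵀ = P := by
    have h := hP.1
    rw [← Matrix.conjTranspose_eq_transpose_of_trivial]; exact h
  have hsym : ∀ x y : Fin 3 → ℝ, x ⬝ᵥ P.mulVec y = P.mulVec x ⬝ᵥ y := by
    intro x y
    rw [dotProduct_mulVec, ← mulVec_transpose, hPt]
  -- P quadratic form
  have hQ : ∀ a b : ℝ, 0 ≤ a^2 * (P.mulVec u ⬝ᵥ u) + 2*a*b*(P.mulVec u ⬝ᵥ v)
      + b^2 * (P.mulVec v ⬝ᵥ v) := by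
    intro a b
    have h := (Matrix.posSemidef_iff_dotProduct_mulVec.mp hP).2 (a • u + b • v)
    simp only [star_trivial, mulVec_add, mulVec_smul, dotProduct_add, add_dotProduct,
      dotProduct_smul, smul_dotProduct, smul_eq_mul] at h
    have h1 : u ⬝ᵥ P.mulVec u = P.mulVec u ⬝ᵥ u := hsym u u
    have h2 : u ⬝ᵥ P.mulVec v = P.mulVec u ⬝ᵥ v := hsym u v
    have h3 : v ⬝ᵥ P.mulVec u = dotProduct (P.mulVec u) v := by
      rw [hsym v u, dotProduct_comm]; exact hsym u v
    have h4 : v ⬝ᵥ P.mulVec v = P.mulVec v ⬝ᵥ v := hsym v v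
    rw [h1, h2, h3, h4] at h
    nlinarith [h]
  have hpd : (!![P.mulVec u ⬝ᵥ u + (1 - s^2) / lam,
            P.mulVec u ⬝ᵥ v - s * t / lam;
            P.mulVec u ⬝ᵥ v - s * t / lam,
            P.mulVec v ⬝ᵥ v + (1 - t^2) / lam] : Matrix (Fin 2) (Fin 2) ℝ).PosDef := by
    rw [Matrix.posDef_iff_dotProduct_mulVec]
    constructor
    · ext i j
      fin_cases i <;> fin_cases j <;>
        simp [Matrix.conjTranspose, Matrix.vecHead, Matrix.vecTail]
    · intro x hx
      have hab : 0 < (x 0)^2 + (x 1)^2 := by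
        have hor : x 0 ≠ 0 ∨ x 1 ≠ 0 := by
          by_contra h
          push_neg at h
          exact hx (funext fun i => by fin_cases i <;> simp [h.1, h.2])
        rcases hor with h | h <;> positivity
      set a := x 0
      set b := x 1
      have hxMx : star x ⬝ᵥ (!![P.mulVec u ⬝ᵥ u + (1 - s^2) / lam,
            P.mulVec u ⬝ᵥ v - s * t / lam;
            P.mulVec u ⬝ᵥ v - s * t / lam,
            P.mulVec v ⬝ᵥ v + (1 - t^2) / lam] : Matrix (Fin 2) (Fin 2) ℝ) *ᵥ x
          = (a^2 * (P.mulVec u ⬝ᵥ u) + 2*a*b*(P.mulVec u ⬝ᵥ v) + b^2 * (P.mulVec v ⬝ᵥ v))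
            + (a^2 + b^2 - (a*s + b*t)^2) / lam := by
        simp [mulVec, dotProduct, Fin.sum_univ_two, star_trivial]
        ring
      rw [hxMx]
      have hnum : 0 < a^2 + b^2 - (a*s + b*t)^2 := by
        nlinarith [sq_nonneg (a*t - b*s), mul_pos hr2 hab]
      have := hQ a b
      have := div_pos hnum hlam
      linarith
  refine ⟨?_, ?_, ?_, hpd⟩
  · exact hpd.det_pos
  · have hPuu := hQ 1 0
    have hPvv := hQ 0 1
    have hA : 0 < (1 - s^2)/lam := div_pos (by nlinarith) hlam
    have hB : 0 < (1 - t^2)/lam := div_pos (by nlinarith) hlam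
    have : (!![P.mulVec u ⬝ᵥ u + (1 - s^2) / lam,
            P.mulVec u ⬝ᵥ v - s * t / lam;
            P.mulVec u ⬝ᵥ v - s * t / lam,
            P.mulVec v ⬝ᵥ v + (1 - t^2) / lam] : Matrix (Fin 2) (Fin 2) ℝ).trace
        = (P.mulVec u ⬝ᵥ u + (1 - s^2) / lam) + (P.mulVec v ⬝ᵥ v + (1 - t^2) / lam) := by
      rw [Matrix.trace_fin_two]
      norm_num
    rw [this]
    nlinarith [hPuu, hPvv, hA, hB]
  · exact (Matrix.isUnit_iff_isUnit_det _).2 hpd.det_pos.ne'.isUnit
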